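/- (Crossover window bound.) Let A and B be RNA structures of length n with Nussinov–Jacobson energy with parameter C > 0, bp(AΔB) > 0, and set R = 0.001987 and T₀ = 310. If p₁ and p₂ are both real numbers at which exp(−E(A|M(p))/(R·T₀)) ≥ (1/9)·exp(−E(B|M(p))/(R·T₀)) and exp(−E(B|M(p))/(R·T₀)) ≥ (1/9)·exp(−E(A|M(p))/(R·T₀)), then |p₁ − p₂| ≤ R·T₀·ln 9 / (C·bp(AΔB)). -/
import Mathlib


-- An RNA structure of length `n` is `A : Fin n → Bool`; `A i = true` means `i` is paired.
/-- `bp A` = number of paired nucleotides of `A`. -/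
def bp {n : ℕ} (A : Fin n → Bool) : ℕ :=
  (Finset.univ.filter fun i => A i = true).card

/-- `bpd A B` = number of positions paired in `A` but not in `B`. -/
def bpd {n : ℕ} (A B : Fin n → Bool) : ℕ :=
  (Finset.univ.filter fun i => A i = true ∧ B i = false).card

/-- `bps A B` = bp(A Δ B) = bp(A−B) + bp(B−A). -/
def bps {n : ℕ} (A B : Fin n → Bool) : ℕ := bpd A B + bpd B A

/-- The noiseless data sequence of a structure: 0 at paired positions, 1 at unpaired. -/
def dat {n : ℕ} (A : Fin n → Bool) : Fin n → ℝ := fun i => if A i then 0 else 1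

/-- Mixed data `M(p)` for structures `A`, `B`. -/
def mixd {n : ℕ} (A B : Fin n → Bool) (p : ℝ) : Fin n → ℝ :=
  fun i => p * dat A i + (1 - p) * dat B i

/-- Nussinov–Jacobson energy of structure `A` with parameter `C` and data `M`. -/
noncomputable def njE {n : ℕ} (C : ℝ) (A : Fin n → Bool) (M : Fin n → ℝ) : ℝ :=
  -(bp A : ℝ) + C * ∑ i, |(if A i then (0 : ℝ) else 1) - M i|
lemma sum_ind {n : ℕ} (A B : Fin n → Bool) :
    ∑ i : Fin n, (if A i = B i then (0:ℝ) else 1) = (bps A B : ℝ) := by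
  rw [bps, bpd, bpd]
  push_cast
  rw [← Finset.sum_boole, ← Finset.sum_boole, ← Finset.sum_add_distrib]
  refine Finset.sum_congr rfl fun i _ => ?_
  cases hA : A i <;> cases hB : B i <;> simp [hA, hB]

lemma njE_diff {n : ℕ} (A B : Fin n → Bool) (C : ℝ) (p : ℝ) (hp0 : 0 ≤ p) (hp1 : p ≤ 1) :
    njE C A (mixd A B p) - njE C B (mixd A B p)
      = ((bp B : ℝ) - (bp A : ℝ)) + C * (1 - 2*p) * (bps A B : ℝ) := by
  have hA : ∑ i, |(if A i then (0:ℝ) else 1) - mixd A B p i|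
      = (1 - p) * (bps A B : ℝ) := by
    rw [← sum_ind A B, Finset.mul_sum]
    refine Finset.sum_congr rfl fun i _ => ?_
    cases hAi : A i <;> cases hBi : B i <;>
      simp only [mixd, dat, hAi, hBi, Bool.false_eq_true, Bool.true_eq_false,
        ite_true, ite_false, if_true, if_false]
    · rw [show (1:ℝ) - (p * 1 + (1 - p) * 1) = 0 by ring]; simp
    · rw [show (1:ℝ) - (p * 1 + (1 - p) * 0) = 1 - p by ring,
        abs_of_nonneg (by linarith)]; ring
    · rw [show (0:ℝ) - (p * 0 + (1 - p) * 1) = -(1 - p) by ring, abs_neg,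
        abs_of_nonneg (by linarith)]; ring
    · rw [show (0:ℝ) - (p * 0 + (1 - p) * 0) = 0 by ring]; simp
  have hB : ∑ i, |(if B i then (0:ℝ) else 1) - mixd A B p i|
      = p * (bps A B : ℝ) := by
    rw [← sum_ind A B, Finset.mul_sum]
    refine Finset.sum_congr rfl fun i _ => ?_
    cases hAi : A i <;> cases hBi : B i <;>
      simp only [mixd, dat, hAi, hBi, Bool.false_eq_true, Bool.true_eq_false,
        ite_true, ite_false, if_true, if_false]
    · rw [show (1:ℝ) - (p * 1 + (1 - p) * 1) = 0 by ring]; simp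
    · rw [show (0:ℝ) - (p * 1 + (1 - p) * 0) = -p by ring, abs_neg,
        abs_of_nonneg hp0]; ring
    · rw [show (1:ℝ) - (p * 0 + (1 - p) * 1) = p by ring,
        abs_of_nonneg hp0]; ring
    · rw [show (0:ℝ) - (p * 0 + (1 - p) * 0) = 0 by ring]; simp
  rw [njE, njE, hA, hB]; ring

lemma ratio_bound (a b : ℝ) (h : Real.exp a ≥ (1/9) * Real.exp b) : b - a ≤ Real.log 9 := by
  have h9 : (1/9 : ℝ) * Real.exp b = Real.exp (b - Real.log 9) := by
    rw [Real.exp_sub, Real.exp_log (by norm_num)]; ring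
  rw [h9] at h
  have := Real.exp_le_exp.mp h
  linarith


/-- Crossover window bound: any two points `p₁, p₂` of the crossover window (points of
`[0,1]` where both Boltzmann-ratio conditions hold) satisfy
`|p₁ − p₂| ≤ R·T₀·ln 9 / (C·bp(AΔB))`, with `R = 0.001987`, `T₀ = 310`. -/
theorem nj_crossover_window_bound {n : ℕ} (A B : Fin n → Bool) (C : ℝ) (hC : 0 < C)
    (hs : 0 < bps A B) (p₁ p₂ : ℝ)
    (hp₁ : p₁ ∈ Set.Icc (0 : ℝ) 1) (hp₂ : p₂ ∈ Set.Icc (0 : ℝ) 1)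
    (h₁a : Real.exp (-njE C A (mixd A B p₁) / (0.001987 * 310)) ≥
      (1 / 9) * Real.exp (-njE C B (mixd A B p₁) / (0.001987 * 310)))
    (h₁b : Real.exp (-njE C B (mixd A B p₁) / (0.001987 * 310)) ≥
      (1 / 9) * Real.exp (-njE C A (mixd A B p₁) / (0.001987 * 310)))
    (h₂a : Real.exp (-njE C A (mixd A B p₂) / (0.001987 * 310)) ≥
      (1 / 9) * Real.exp (-njE C B (mixd A B p₂) / (0.001987 * 310)))
    (h₂b : Real.exp (-njE C B (mixd A B p₂) / (0.001987 * 310)) ≥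
      (1 / 9) * Real.exp (-njE C A (mixd A B p₂) / (0.001987 * 310))) :
    |p₁ - p₂| ≤ 0.001987 * 310 * Real.log 9 / (C * (bps A B : ℝ)) := by
  set rt : ℝ := 0.001987 * 310 with hrt
  have hrtpos : (0:ℝ) < rt := by norm_num [hrt]
  set L : ℝ := rt * Real.log 9 with hL
  have key : ∀ p : ℝ, 0 ≤ p → p ≤ 1 →
      Real.exp (-njE C A (mixd A B p) / rt) ≥ (1/9) * Real.exp (-njE C B (mixd A B p) / rt) →
      Real.exp (-njE C B (mixd A B p) / rt) ≥ (1/9) * Real.exp (-njE C A (mixd A B p) / rt) →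
      |((bp B : ℝ) - (bp A : ℝ)) + C * (1 - 2*p) * (bps A B : ℝ)| ≤ L := by
    intro p h0 h1 ha hb
    have d1 := ratio_bound _ _ ha
    have d2 := ratio_bound _ _ hb
    rw [neg_div, neg_div] at d1 d2
    have e1 : (njE C B (mixd A B p) - njE C A (mixd A B p)) / rt ≤ Real.log 9 := by
      rw [sub_div]; linarith
    have e2 : (njE C A (mixd A B p) - njE C B (mixd A B p)) / rt ≤ Real.log 9 := by
      rw [sub_div]; linarith
    have f1 := (div_le_iff₀ hrtpos).mp e1
    have f2 := (div_le_iff₀ hrtpos).mp e2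
    have hd := njE_diff A B C p h0 h1
    rw [abs_le]
    constructor <;> [nlinarith; nlinarith]
  have H1 := abs_le.mp (key p₁ hp₁.1 hp₁.2 h₁a h₁b)
  have H2 := abs_le.mp (key p₂ hp₂.1 hp₂.2 h₂a h₂b)
  have hcb : (0:ℝ) < C * (bps A B : ℝ) := by
    have : (0:ℝ) < (bps A B : ℝ) := by exact_mod_cast hs
    positivity
  rw [le_div_iff₀ hcb]
  rcases abs_cases (p₁ - p₂) with ⟨h, _⟩ | ⟨h, _⟩ <;> rw [h] <;>
    nlinarith [H1.1, H1.2, H2.1, H2.2]
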